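/- For y ∈ ℝ² with y ≠ 0 and for the integral over the ball B_{2|y|}(0) ⊂ ℝ² we have ∫_{B_{2|y|}(0)} dx / (|x| |x−y|) ≤ 20π. -/

import Mathlib

open MeasureTheory Filter Metric

noncomputable section

abbrev Pt := EuclideanSpace ℝ (Fin 2)

open Set ENNReal Measure

lemma pt_volume_ball (c : Pt) (s : ℝ) (hs : 0 ≤ s) :
    volume (Metric.ball c s) = ENNReal.ofReal (Real.pi * s ^ 2) := by
  rw [EuclideanSpace.volume_ball, show (Fintype.card (Fin 2)) = 2 from by simp,
    show ((2:ℕ):ℝ)/2 + 1 = 2 from by norm_num, Real.Gamma_two, div_one,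
    Real.sq_sqrt Real.pi_pos.le, ← ENNReal.ofReal_pow hs,
    ← ENNReal.ofReal_mul (by positivity)]
  rw [mul_comm]

/-- Polar-coordinates formula for lintegrals of radial functions on the plane. -/
lemma lintegral_radial (g : ℝ → ℝ≥0∞) (hg : Measurable g) :
    ∫⁻ x : Pt, g ‖x‖ = (2 * ENNReal.ofReal Real.pi) *
      ∫⁻ t in Set.Ioi (0 : ℝ), ENNReal.ofReal t * g t := by
  have hdim : Module.finrank ℝ Pt = 2 := finrank_euclideanSpace_fin
  have h0 : ∫⁻ x : Pt, g ‖x‖ ∂volume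
      = ∫⁻ x : ({0}ᶜ : Set Pt), g ‖x.1‖ ∂(volume.comap Subtype.val) := by
    rw [lintegral_subtype_comap (measurableSet_singleton (0 : Pt)).compl
      (fun a : Pt => g ‖a‖), MeasureTheory.restrict_compl_singleton]
  have hcomp := ((volume : Measure Pt).measurePreserving_homeomorphUnitSphereProd).lintegral_comp_emb
    (Homeomorph.measurableEmbedding _)
    (fun p : Metric.sphere (0 : Pt) 1 × Set.Ioi (0 : ℝ) => g p.2.1)
  have h1 : ∫⁻ x : ({0}ᶜ : Set Pt), g ‖x.1‖ ∂(volume.comap Subtype.val)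
      = ∫⁻ p : Metric.sphere (0 : Pt) 1 × Set.Ioi (0 : ℝ), g p.2.1
          ∂((volume : Measure Pt).toSphere.prod (Measure.volumeIoiPow (Module.finrank ℝ Pt - 1))) := by
    rw [← hcomp]
    exact lintegral_congr fun x => by simp
  have h2 : ∫⁻ p : Metric.sphere (0 : Pt) 1 × Set.Ioi (0 : ℝ), g p.2.1
          ∂((volume : Measure Pt).toSphere.prod (Measure.volumeIoiPow (Module.finrank ℝ Pt - 1)))
      = ((volume : Measure Pt).toSphere Set.univ) *
          ∫⁻ t : Set.Ioi (0 : ℝ), g t.1 ∂(Measure.volumeIoiPow (Module.finrank ℝ Pt - 1)) := by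
    have := lintegral_prod_mul (μ := (volume : Measure Pt).toSphere)
      (ν := Measure.volumeIoiPow (Module.finrank ℝ Pt - 1))
      (f := fun _ : Metric.sphere (0 : Pt) 1 => (1 : ℝ≥0∞))
      (g := fun t : Set.Ioi (0 : ℝ) => g t.1)
      aemeasurable_const ((hg.comp measurable_subtype_coe).aemeasurable)
    simpa [lintegral_one] using this
  have hgs : Measurable fun t : Set.Ioi (0 : ℝ) => g t.1 := hg.comp measurable_subtype_coe
  have h3 : ∫⁻ t : Set.Ioi (0 : ℝ), g t.1 ∂(Measure.volumeIoiPow (Module.finrank ℝ Pt - 1))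
      = ∫⁻ t in Set.Ioi (0 : ℝ), ENNReal.ofReal t * g t ∂volume := by
    rw [hdim]
    rw [Measure.volumeIoiPow,
      lintegral_withDensity_eq_lintegral_mul _
        ((measurable_subtype_coe.pow_const (2 - 1)).ennreal_ofReal) hgs]
    simp only [Pi.mul_apply]
    rw [lintegral_subtype_comap measurableSet_Ioi
      (fun t : ℝ => ENNReal.ofReal (t ^ (2 - 1)) * g t)]
    simp [pow_one]
  have h4 : (volume : Measure Pt).toSphere Set.univ = 2 * ENNReal.ofReal Real.pi := by
    rw [Measure.toSphere_apply_univ, hdim, pt_volume_ball _ _ zero_le_one]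
    norm_num
  rw [h0, h1, h2, h3, h4]

lemma key_radial (R : ℝ) :
    ∫⁻ x in Metric.ball (0 : Pt) R, ENNReal.ofReal ‖x‖⁻¹
      ≤ ENNReal.ofReal (2 * Real.pi * R) := by
  set g : ℝ → ℝ≥0∞ := fun t => (Set.Iio R).indicator (fun t => ENNReal.ofReal t⁻¹) t with hgdef
  have hg : Measurable g := (measurable_inv.ennreal_ofReal).indicator measurableSet_Iio
  have hfun : (fun x : Pt => g ‖x‖)
      = (Metric.ball (0 : Pt) R).indicator (fun x => ENNReal.ofReal ‖x‖⁻¹) := by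
    ext x
    by_cases h : ‖x‖ < R <;>
      simp [hgdef, Set.indicator, h, mem_ball_zero_iff]
  have hiio : ∫⁻ t in Set.Ioi (0 : ℝ), ENNReal.ofReal t * g t = ENNReal.ofReal R := by
    have hcongr : ∀ t ∈ Set.Ioi (0 : ℝ),
        ENNReal.ofReal t * g t = (Set.Ioo (0 : ℝ) R).indicator (fun _ => (1 : ℝ≥0∞)) t := by
      intro t ht
      by_cases h : t < R
      · have : ENNReal.ofReal t * ENNReal.ofReal t⁻¹ = 1 := by
          rw [← ENNReal.ofReal_mul ht.out.le, mul_inv_cancel₀ ht.out.ne', ENNReal.ofReal_one]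
        simp [hgdef, Set.indicator, h, ht.out]
        exact ENNReal.mul_inv_cancel (ENNReal.ofReal_pos.2 ht.out).ne' ENNReal.ofReal_ne_top
      · simp [hgdef, Set.indicator, h, ht.out]
    rw [setLIntegral_congr_fun measurableSet_Ioi hcongr]
    rw [lintegral_indicator measurableSet_Ioo]
    rw [Measure.restrict_restrict measurableSet_Ioo,
      Set.inter_eq_left.2 Set.Ioo_subset_Ioi_self]
    simp [Real.volume_Ioo]
  calc ∫⁻ x in Metric.ball (0 : Pt) R, ENNReal.ofReal ‖x‖⁻¹
      = ∫⁻ x : Pt, g ‖x‖ := by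
        rw [hfun, lintegral_indicator measurableSet_ball]
    _ = (2 * ENNReal.ofReal Real.pi) * ENNReal.ofReal R := by
        rw [lintegral_radial g hg, hiio]
    _ ≤ ENNReal.ofReal (2 * Real.pi * R) := by
        rw [ENNReal.ofReal_mul (by positivity), ENNReal.ofReal_mul (by norm_num)]
        simp [mul_assoc]

lemma key_radial' (c : Pt) (R : ℝ) :
    ∫⁻ x in Metric.ball c R, ENNReal.ofReal ‖x - c‖⁻¹
      ≤ ENNReal.ofReal (2 * Real.pi * R) := by
  have hmp : MeasurePreserving (fun x : Pt => x + c) volume volume :=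
    measurePreserving_add_right volume c
  have hmeas : Measurable fun x : Pt => ENNReal.ofReal ‖x - c‖⁻¹ :=
    ((continuous_id.sub continuous_const).norm.measurable).inv.ennreal_ofReal
  have hpre : (fun x : Pt => x + c) ⁻¹' Metric.ball c R = Metric.ball (0 : Pt) R := by
    ext x
    simp [mem_ball, dist_eq_norm]
  have := hmp.setLIntegral_comp_preimage (s := Metric.ball c R) measurableSet_ball hmeas
  rw [hpre] at this
  simp only [add_sub_cancel_right] at this
  rw [← this]
  exact key_radial R

lemma aux_ineq {r a b : ℝ} (hr : 0 < r) (ha : 0 ≤ a) (hb : r / 2 ≤ b) :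
    1 / (a * b) ≤ 2 / r * a⁻¹ := by
  rcases eq_or_lt_of_le ha with h | h
  · simp [← h]
  · have hb0 : 0 < b := lt_of_lt_of_le (by positivity) hb
    rw [one_div, mul_inv, mul_comm]
    have h1 : b⁻¹ ≤ 2 / r :=
      calc b⁻¹ ≤ (r / 2)⁻¹ := inv_anti₀ (by positivity) hb
        _ = 2 / r := by rw [inv_div]
    exact mul_le_mul_of_nonneg_right h1 (inv_nonneg.2 ha)

/-- `∫_{B_{2|y|}(0)} dx/(|x||x-y|) ≤ 20π` for `y ≠ 0` in the plane. -/
theorem stmt6 (y : Pt) (hy : y ≠ 0) :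
    ∫ x in Metric.ball (0 : Pt) (2 * ‖y‖), 1 / (‖x‖ * ‖x - y‖) ≤ 20 * Real.pi := by
  set r : ℝ := ‖y‖ with hrdef
  have hr : 0 < r := norm_pos_iff.2 hy
  set f : Pt → ℝ := fun x => 1 / (‖x‖ * ‖x - y‖) with hfdef
  have hfmeas : Measurable f := by
    have : Measurable fun x : Pt => ‖x‖ * ‖x - y‖ :=
      (continuous_norm.mul ((continuous_id.sub continuous_const).norm)).measurable
    exact measurable_const.div this
  have hfnn : ∀ x, 0 ≤ f x := fun x => by positivity
  -- the three pieces
  set S1 : Set Pt := Metric.ball (0 : Pt) (r / 2) with hS1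
  set S2 : Set Pt := Metric.ball y (r / 2) with hS2
  set S3 : Set Pt := Metric.ball (0 : Pt) (2 * r) \ (S1 ∪ S2) with hS3
  have hsub : Metric.ball (0 : Pt) (2 * r) ⊆ (S1 ∪ S2) ∪ S3 := by
    intro x hx
    by_cases h : x ∈ S1 ∪ S2
    · exact Or.inl h
    · exact Or.inr ⟨hx, h⟩
  -- bound on S1
  have hb1 : ∫⁻ x in S1, ENNReal.ofReal (f x) ≤ ENNReal.ofReal (2 * Real.pi) := by
    have hstep : ∫⁻ x in S1, ENNReal.ofReal (f x)
        ≤ ∫⁻ x in S1, ENNReal.ofReal (2 / r) * ENNReal.ofReal ‖x‖⁻¹ := by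
      refine setLIntegral_mono (measurable_const.mul
        (measurable_norm.inv.ennreal_ofReal)) fun x hx => ?_
      have hxy : r / 2 ≤ ‖x - y‖ := by
        have h1 : ‖x‖ < r / 2 := mem_ball_zero_iff.1 hx
        have h2 : ‖y‖ - ‖x‖ ≤ ‖x - y‖ := by
          rw [norm_sub_rev]; exact norm_sub_norm_le y x
        linarith
      rw [← ENNReal.ofReal_mul (by positivity)]
      exact ENNReal.ofReal_le_ofReal (aux_ineq hr (norm_nonneg x) hxy)
    rw [lintegral_const_mul (f := fun x : Pt => ENNReal.ofReal ‖x‖⁻¹) _ (measurable_norm.inv.ennreal_ofReal)] at hstep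
    calc ∫⁻ x in S1, ENNReal.ofReal (f x)
        ≤ ENNReal.ofReal (2 / r) * ∫⁻ x in S1, ENNReal.ofReal ‖x‖⁻¹ := hstep
      _ ≤ ENNReal.ofReal (2 / r) * ENNReal.ofReal (2 * Real.pi * (r / 2)) :=
          mul_le_mul_right (key_radial (r / 2)) _
      _ = ENNReal.ofReal (2 / r * (2 * Real.pi * (r / 2))) :=
          (ENNReal.ofReal_mul (by positivity)).symm
      _ = ENNReal.ofReal (2 * Real.pi) := by
          congr 1
          field_simp
  -- bound on S2
  have hb2 : ∫⁻ x in S2, ENNReal.ofReal (f x) ≤ ENNReal.ofReal (2 * Real.pi) := by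
    have hm2 : Measurable fun x : Pt => ENNReal.ofReal ‖x - y‖⁻¹ := by fun_prop
    have hstep : ∫⁻ x in S2, ENNReal.ofReal (f x)
        ≤ ∫⁻ x in S2, ENNReal.ofReal (2 / r) * ENNReal.ofReal ‖x - y‖⁻¹ := by
      refine setLIntegral_mono (measurable_const.mul hm2) fun x hx => ?_
      have hx' : ‖x - y‖ < r / 2 := by
        have := mem_ball_iff_norm.1 hx
        simpa using this
      have hxn : r / 2 ≤ ‖x‖ := by
        have h2 : ‖y‖ - ‖y - x‖ ≤ ‖x‖ := by
          have := norm_sub_norm_le y (y - x)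
          have hyx : y - (y - x) = x := by abel
          rwa [hyx] at this
        have h3 : ‖y - x‖ = ‖x - y‖ := norm_sub_rev y x
        rw [h3] at h2
        linarith
      have hfx : f x = 1 / (‖x - y‖ * ‖x‖) := by rw [hfdef]; ring_nf
      rw [← ENNReal.ofReal_mul (by positivity), hfx]
      exact ENNReal.ofReal_le_ofReal (aux_ineq hr (norm_nonneg _) hxn)
    rw [lintegral_const_mul _ hm2] at hstep
    calc ∫⁻ x in S2, ENNReal.ofReal (f x)
        ≤ ENNReal.ofReal (2 / r) * ∫⁻ x in S2, ENNReal.ofReal ‖x - y‖⁻¹ := hstep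
      _ ≤ ENNReal.ofReal (2 / r) * ENNReal.ofReal (2 * Real.pi * (r / 2)) :=
          mul_le_mul_right (key_radial' y (r / 2)) _
      _ = ENNReal.ofReal (2 / r * (2 * Real.pi * (r / 2))) :=
          (ENNReal.ofReal_mul (by positivity)).symm
      _ = ENNReal.ofReal (2 * Real.pi) := by
          congr 1
          field_simp
  -- bound on S3
  have hb3 : ∫⁻ x in S3, ENNReal.ofReal (f x) ≤ ENNReal.ofReal (16 * Real.pi) := by
    have hstep : ∫⁻ x in S3, ENNReal.ofReal (f x)
        ≤ ∫⁻ _x in S3, ENNReal.ofReal (4 / r ^ 2) := by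
      refine setLIntegral_mono measurable_const fun x hx => ?_
      obtain ⟨-, hx2⟩ := hx
      rw [Set.mem_union, not_or] at hx2
      have h1 : r / 2 ≤ ‖x‖ := by
        have hx1 := hx2.1
        simp only [hS1, mem_ball_zero_iff, not_lt] at hx1
        exact hx1
      have h2 : r / 2 ≤ ‖x - y‖ := by
        have hx1 := hx2.2
        simp only [hS2, mem_ball_iff_norm, not_lt] at hx1
        exact hx1
      refine ENNReal.ofReal_le_ofReal ?_
      have hpos : (0:ℝ) < r / 2 * (r / 2) := by positivity
      calc f x = 1 / (‖x‖ * ‖x - y‖) := rfl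
        _ ≤ 1 / (r / 2 * (r / 2)) := by
            apply one_div_le_one_div_of_le hpos
            have := mul_le_mul h1 h2 (by positivity) (norm_nonneg x)
            linarith [this]
        _ = 4 / r ^ 2 := by field_simp; ring
    rw [setLIntegral_const] at hstep
    have hvol : volume S3 ≤ ENNReal.ofReal (Real.pi * (2 * r) ^ 2) := by
      calc volume S3 ≤ volume (Metric.ball (0 : Pt) (2 * r)) :=
            measure_mono Set.diff_subset
        _ = ENNReal.ofReal (Real.pi * (2 * r) ^ 2) := pt_volume_ball _ _ (by positivity)
    calc ∫⁻ x in S3, ENNReal.ofReal (f x)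
        ≤ ENNReal.ofReal (4 / r ^ 2) * volume S3 := hstep
      _ ≤ ENNReal.ofReal (4 / r ^ 2) * ENNReal.ofReal (Real.pi * (2 * r) ^ 2) :=
          mul_le_mul_right hvol _
      _ = ENNReal.ofReal (4 / r ^ 2 * (Real.pi * (2 * r) ^ 2)) :=
          (ENNReal.ofReal_mul (by positivity)).symm
      _ = ENNReal.ofReal (16 * Real.pi) := by
          congr 1
          field_simp
          ring
  -- assemble the lintegral bound
  have hbound : ∫⁻ x in Metric.ball (0 : Pt) (2 * r), ENNReal.ofReal (f x)
      ≤ ENNReal.ofReal (20 * Real.pi) := by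
    calc ∫⁻ x in Metric.ball (0 : Pt) (2 * r), ENNReal.ofReal (f x)
        ≤ ∫⁻ x in (S1 ∪ S2) ∪ S3, ENNReal.ofReal (f x) := lintegral_mono_set hsub
      _ ≤ (∫⁻ x in S1 ∪ S2, ENNReal.ofReal (f x)) + ∫⁻ x in S3, ENNReal.ofReal (f x) :=
          lintegral_union_le _ _ _
      _ ≤ ((∫⁻ x in S1, ENNReal.ofReal (f x)) + ∫⁻ x in S2, ENNReal.ofReal (f x))
            + ∫⁻ x in S3, ENNReal.ofReal (f x) :=
          add_le_add_left (lintegral_union_le _ _ _) _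
      _ ≤ (ENNReal.ofReal (2 * Real.pi) + ENNReal.ofReal (2 * Real.pi))
            + ENNReal.ofReal (16 * Real.pi) :=
          add_le_add (add_le_add hb1 hb2) hb3
      _ = ENNReal.ofReal (20 * Real.pi) := by
          rw [← ENNReal.ofReal_add (by positivity) (by positivity),
            ← ENNReal.ofReal_add (by positivity) (by positivity)]
          ring_nf
  -- convert Bochner integral to lintegral
  have heq : ∫ x in Metric.ball (0 : Pt) (2 * r), f x
      = (∫⁻ x in Metric.ball (0 : Pt) (2 * r), ENNReal.ofReal (f x)).toReal := by
    rw [integral_eq_lintegral_of_nonneg_ae (Filter.Eventually.of_forall hfnn)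
      hfmeas.aestronglyMeasurable]
  calc ∫ x in Metric.ball (0 : Pt) (2 * r), f x
      = (∫⁻ x in Metric.ball (0 : Pt) (2 * r), ENNReal.ofReal (f x)).toReal := heq
    _ ≤ 20 * Real.pi := ENNReal.toReal_le_of_le_ofReal (by positivity) hbound
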